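/- arXiv:2508.14731 — 4 statements merged into one kernel-verified Lean document; each statement's English description precedes it below -/
import Mathlib

section
/- Let P(t) = c_q t^q + ... + c_1 t + c_0 be a non-constant polynomial with integer coefficients, and suppose there exists a prime number p such that p does not divide c_0 but p divides c_i for every 1 ≤ i ≤ q. Then no complex root of P is an algebraic integer. -/
/-- If `P(t) = c_q t^q + ⋯ + c_1 t + c_0 ∈ ℤ[t]` is non-constant and there is a prime `p`
with `p ∤ c_0` and `p ∣ c_i` for all `1 ≤ i ≤ q`, then no complex root of `P` is an
algebraic integer. -/
theorem no_root_is_algebraic_integer (P : Polynomial ℤ) (hP : 0 < P.natDegree)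
    (p : ℕ) (hp : p.Prime)
    (h0 : ¬ (p : ℤ) ∣ P.coeff 0)
    (hi : ∀ i : ℕ, 1 ≤ i → i ≤ P.natDegree → (p : ℤ) ∣ P.coeff i)
    (t₀ : ℂ) (ht₀ : Polynomial.aeval t₀ P = 0) :
    ¬ IsIntegral ℤ t₀ := by
  intro hint
  -- every coefficient of P.divX is divisible by p
  have hdvd : Polynomial.C (p : ℤ) ∣ P.divX := by
    rw [Polynomial.C_dvd_iff_dvd_coeff]
    intro i
    rw [Polynomial.coeff_divX]
    by_cases h : i + 1 ≤ P.natDegree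
    · exact hi (i + 1) (by omega) h
    · rw [Polynomial.coeff_eq_zero_of_natDegree_lt (by omega)]
      exact dvd_zero _
  obtain ⟨R, hR⟩ := hdvd
  -- evaluate at t₀
  have heval : t₀ * ((p : ℂ) * Polynomial.aeval t₀ R) + (P.coeff 0 : ℂ) = 0 := by
    have h1 := Polynomial.X_mul_divX_add P
    have h2 : Polynomial.aeval t₀ (Polynomial.X * P.divX + Polynomial.C (P.coeff 0)) = 0 := by
      rw [h1, ht₀]
    rw [hR] at h2
    simpa using h2
  -- the element t₀ * R(t₀) is an algebraic integer
  have hz : IsIntegral ℤ (t₀ * Polynomial.aeval t₀ R) := by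
    refine hint.mul ?_
    have hmem : Polynomial.aeval t₀ R ∈ Algebra.adjoin ℤ ({t₀} : Set ℂ) :=
      Polynomial.aeval_mem_adjoin_singleton ℤ t₀
    have hle : Algebra.adjoin ℤ ({t₀} : Set ℂ) ≤ integralClosure ℤ ℂ :=
      Algebra.adjoin_le (by simpa [mem_integralClosure_iff] using hint)
    exact hle hmem
  -- it equals the rational number -c₀/p
  have hpne : (p : ℂ) ≠ 0 := by exact_mod_cast hp.ne_zero
  have hq : algebraMap ℚ ℂ (-(P.coeff 0 : ℚ) / p) = t₀ * Polynomial.aeval t₀ R := by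
    have : t₀ * Polynomial.aeval t₀ R = -(P.coeff 0 : ℂ) / p := by
      field_simp
      linear_combination heval
    rw [this]
    simp [map_div₀]
  have hqint : IsIntegral ℤ (-(P.coeff 0 : ℚ) / p) :=
    (isIntegral_algebraMap_iff (algebraMap ℚ ℂ).injective).mp (hq ▸ hz)
  obtain ⟨y, hy⟩ := IsIntegrallyClosed.isIntegral_iff.mp hqint
  apply h0
  refine ⟨-y, ?_⟩
  have hppos : (0 : ℚ) < p := by exact_mod_cast hp.pos
  have : (P.coeff 0 : ℚ) = (p : ℚ) * (-y : ℤ) := by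
    have hy' : (y : ℚ) = -(P.coeff 0 : ℚ) / p := by exact_mod_cast hy
    push_cast
    field_simp at hy'
    linarith [hy']
  exact_mod_cast this
end

section
/- Let V = [[e, f], [g, h]] be a 2×2 complex matrix with eh − fg = 1 and set v = tr V. Then for every natural number l, det( Σ_{i=0}^{l} AdM(V)^i ) = (l+1) · S_l(v)². -/
open Polynomial

/-- Integer-indexed Chebyshev-like polynomials: `S 0 = 1`, `S 1 = X`,
and `S (l+1) = X * S l - S (l-1)` for all `l : ℤ`
(equivalently `S l = U_l (v/2)` for the Chebyshev polynomials `U` of the second kind). -/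
@[semireducible] noncomputable def chebS (R : Type*) [CommRing R] : ℤ → R[X]
  | 0 => 1
  | 1 => X
  | (n : ℕ) + 2 => X * chebS R (n + 1) - chebS R n
  | -((n : ℕ) + 1) => X * chebS R (-n) - chebS R (-n + 1)
  termination_by n => Int.natAbs n + Int.natAbs (n - 1)


/-- `tS v (n+2) = S_n(v)`, shifted so `tS v 0 = S_{-2} = -1`, `tS v 1 = S_{-1} = 0`. -/
noncomputable def tS (v : ℂ) : ℕ → ℂ
  | 0 => -1
  | 1 => 0
  | n + 2 => v * tS v (n + 1) - tS v n

lemma tS_add_two (v : ℂ) (n : ℕ) : tS v (n + 2) = v * tS v (n + 1) - tS v n := rfl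

lemma chebS_nat_eval (v : ℂ) (l : ℕ) : (chebS ℂ (l : ℤ)).eval v = tS v (l + 2) := by
  induction l using Nat.twoStepInduction with
  | zero => norm_num [chebS, tS]
  | one => norm_num [tS]; rw [chebS]; simp [tS]
  | more n ih1 ih2 =>
      have h3 : chebS ℂ ((n + 2 : ℕ) : ℤ) = X * chebS ℂ ((n + 1 : ℕ) : ℤ) - chebS ℂ ((n : ℕ) : ℤ) := by
        have := chebS.eq_3 ℂ n
        rw [show ((n + 2 : ℕ) : ℤ) = Int.ofNat n.succ.succ from rfl, this]
        norm_num
      rw [h3]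
      simp only [eval_sub, eval_mul, eval_X]
      rw [ih1, ih2]
      have r2 : tS v (n + 2 + 2) = v * tS v (n + 2 + 1) - tS v (n + 2) := rfl
      have r1 : tS v (n + 2 + 1) = v * tS v (n + 1 + 1) - tS v (n + 1) := rfl
      rw [r2, r1]

lemma pell (v : ℂ) (n : ℕ) :
    tS v (n + 1) ^ 2 - v * tS v (n + 1) * tS v n + tS v n ^ 2 = 1 := by
  induction n with
  | zero => simp [tS]
  | succ n ih =>
      have hr := tS_add_two v n
      linear_combination ih + (tS v (n + 2) - tS v n) * hr

noncomputable def aS (v : ℂ) (l : ℕ) : ℂ := ∑ i ∈ Finset.range (l + 1), tS v (i + 1) ^ 2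
noncomputable def bS (v : ℂ) (l : ℕ) : ℂ := ∑ i ∈ Finset.range (l + 1), tS v (i + 1) * tS v i
noncomputable def cS (v : ℂ) (l : ℕ) : ℂ := ∑ i ∈ Finset.range (l + 1), tS v i ^ 2

lemma aS_succ (v : ℂ) (l : ℕ) : aS v (l + 1) = aS v l + tS v (l + 2) ^ 2 := by
  simp [aS, Finset.sum_range_succ]
lemma bS_succ (v : ℂ) (l : ℕ) : bS v (l + 1) = bS v l + tS v (l + 2) * tS v (l + 1) := by
  simp [bS, Finset.sum_range_succ]
lemma cS_succ (v : ℂ) (l : ℕ) : cS v (l + 1) = cS v l + tS v (l + 1) ^ 2 := by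
  simp [cS, Finset.sum_range_succ]

lemma hL0 (v : ℂ) (l : ℕ) : aS v l - v * bS v l + cS v l = (l : ℂ) + 1 := by
  induction l with
  | zero => simp [aS, bS, cS, tS]
  | succ l ih =>
      rw [aS_succ, bS_succ, cS_succ]
      push_cast
      linear_combination ih + pell v (l + 1)

lemma hL1 (v : ℂ) (l : ℕ) : v * aS v l - 2 * bS v l = tS v (l + 2) * tS v (l + 1) := by
  induction l with
  | zero => simp [aS, bS, tS]
  | succ l ih =>
      rw [aS_succ, bS_succ]
      have r : tS v (l + 1 + 2) = v * tS v (l + 2) - tS v (l + 1) := rfl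
      linear_combination ih - tS v (l + 2) * r

lemma hL2 (v : ℂ) (l : ℕ) : aS v l - cS v l = tS v (l + 1) ^ 2 - 1 := by
  induction l with
  | zero => simp [aS, cS, tS]
  | succ l ih =>
      rw [aS_succ, cS_succ]
      linear_combination ih

lemma hLA (v : ℂ) (l : ℕ) :
    (v ^ 2 - 4) * aS v l = v * tS v (l + 2) * tS v (l + 1) - 2 * tS v (l + 1) ^ 2 - 2 * l := by
  induction l with
  | zero => simp [aS, tS]
  | succ l ih =>
      rw [aS_succ]
      have r : tS v (l + 1 + 2) = v * tS v (l + 2) - tS v (l + 1) := rfl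
      push_cast
      linear_combination ih - 2 * pell v (l + 1) - v * tS v (l + 2) * r

lemma hMain (v : ℂ) (l : ℕ) :
    (v ^ 2 - 4) * (bS v l ^ 2 - aS v l * cS v l) = ((l : ℂ) + 1) ^ 2 - tS v (l + 2) ^ 2 := by
  induction l with
  | zero => simp [aS, bS, cS, tS]
  | succ l ih =>
      rw [aS_succ, bS_succ, cS_succ]
      have r : tS v (l + 1 + 2) = v * tS v (l + 2) - tS v (l + 1) := rfl
      push_cast
      linear_combination ih - ((v ^ 2 - 4) * tS v (l + 2) * tS v (l + 1)) * hL1 v l +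
        ((v ^ 2 - 4) * tS v (l + 2) ^ 2) * hL2 v l + (3 - (v ^ 2 - 4) * aS v l) * pell v (l + 1) -
        hLA v l + (tS v (l + 1 + 2) + v * tS v (l + 2) - tS v (l + 1)) * r

lemma adm_pow (e f g h : ℂ) (hdet : e * h - f * g = 1) (i : ℕ) :
    (!![e^2, -2*(e*f), -f^2;
        -(e*g), e*h + f*g, f*h;
        -g^2, 2*(g*h), h^2]) ^ i =
    !![(e * tS (e+h) (i+1) - tS (e+h) i)^2,
         -2*((e * tS (e+h) (i+1) - tS (e+h) i) * (f * tS (e+h) (i+1))),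
         -(f * tS (e+h) (i+1))^2;
       -((e * tS (e+h) (i+1) - tS (e+h) i) * (g * tS (e+h) (i+1))),
         (e * tS (e+h) (i+1) - tS (e+h) i) * (h * tS (e+h) (i+1) - tS (e+h) i)
           + (f * tS (e+h) (i+1)) * (g * tS (e+h) (i+1)),
         (f * tS (e+h) (i+1)) * (h * tS (e+h) (i+1) - tS (e+h) i);
       -(g * tS (e+h) (i+1))^2,
         2*((g * tS (e+h) (i+1)) * (h * tS (e+h) (i+1) - tS (e+h) i)),
         (h * tS (e+h) (i+1) - tS (e+h) i)^2] := by
  induction i with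
  | zero =>
      rw [pow_zero, Matrix.one_fin_three]
      norm_num [tS]
  | succ i ih =>
      rw [pow_succ, ih]
      have r : tS (e+h) (i + 1 + 1) = (e+h) * tS (e+h) (i+1) - tS (e+h) i := rfl
      set P := tS (e+h) (i+1) with hP
      set Q := tS (e+h) i with hQ
      rw [Matrix.mul_fin_three, r]
      ext a b
      fin_cases a <;> fin_cases b <;> simp
      · linear_combination (-(2*e^2*P^2 + e*h*P^2 + f*g*P^2 - 2*e*P*Q - P^2)) * hdet
      · linear_combination (-(-2*e*f*P^2 - 2*f*h*P^2 + 2*f*P*Q)) * hdet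
      · linear_combination (0 : ℂ) * hdet
      · linear_combination (-(-e*g*P^2 - g*h*P^2 + g*P*Q)) * hdet
      · linear_combination (-(e^2*P^2 + e*h*P^2 + f*g*P^2 + h^2*P^2 - e*P*Q - h*P*Q - P^2)) * hdet
      · linear_combination (-(e*f*P^2 + f*h*P^2 - f*P*Q)) * hdet
      · linear_combination (0 : ℂ) * hdet
      · linear_combination (-(2*e*g*P^2 + 2*g*h*P^2 - 2*g*P*Q)) * hdet
      · linear_combination (-(e*h*P^2 + f*g*P^2 + 2*h^2*P^2 - 2*h*P*Q - P^2)) * hdet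

lemma sum_adm (e f g h : ℂ) (hdet : e * h - f * g = 1) (l : ℕ) :
    (∑ i ∈ Finset.range (l + 1),
        (!![e^2, -2*(e*f), -f^2;
            -(e*g), e*h + f*g, f*h;
            -g^2, 2*(g*h), h^2]) ^ i) =
    !![e^2 * aS (e+h) l - 2*e*bS (e+h) l + cS (e+h) l,
         -2*(e*f) * aS (e+h) l + 2*f*bS (e+h) l, -f^2 * aS (e+h) l;
       -(e*g) * aS (e+h) l + g*bS (e+h) l,
         (e*h+f*g) * aS (e+h) l - (e+h)*bS (e+h) l + cS (e+h) l,
         f*h * aS (e+h) l - f*bS (e+h) l;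
       -g^2 * aS (e+h) l, 2*(g*h) * aS (e+h) l - 2*g*bS (e+h) l,
         h^2 * aS (e+h) l - 2*h*bS (e+h) l + cS (e+h) l] := by
  induction l with
  | zero =>
      rw [Finset.sum_range_one, pow_zero, Matrix.one_fin_three]
      ext a b
      fin_cases a <;> fin_cases b <;> simp [aS, bS, cS, tS]
  | succ l ih =>
      rw [Finset.sum_range_succ, ih, adm_pow e f g h hdet (l+1), aS_succ, bS_succ, cS_succ]
      have r1 : tS (e+h) (l + 1 + 1) = tS (e+h) (l + 2) := rfl
      rw [r1]
      ext a b
      fin_cases a <;> fin_cases b <;> simp <;> ring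

/-- For `V = [[e,f],[g,h]]` with `eh - fg = 1`, `v = tr V = e + h`, and every `l : ℕ`,
`det (Σ_{i=0}^l AdM(V)^i) = (l+1)·S_l(v)²`. -/
theorem det_geom_sum_adM (e f g h : ℂ) (hdet : e * h - f * g = 1) (l : ℕ) :
    (∑ i ∈ Finset.range (l + 1),
        (!![e^2, -2*(e*f), -f^2;
            -(e*g), e*h + f*g, f*h;
            -g^2, 2*(g*h), h^2]) ^ i).det
      = ((l : ℂ) + 1) * ((chebS ℂ l).eval (e + h)) ^ 2 := by
  rw [sum_adm e f g h hdet l, chebS_nat_eval (e+h) l, Matrix.det_fin_three]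
  set a := aS (e+h) l with ha
  set b := bS (e+h) l with hb
  set c := cS (e+h) l with hc
  set s := tS (e+h) (l + 2) with hs
  have h0 := hL0 (e+h) l
  have hm := hMain (e+h) l
  rw [← hs] at hm
  simp only [Matrix.cons_val', Matrix.cons_val_zero, Matrix.cons_val_one, Matrix.head_cons,
    Matrix.empty_val', Matrix.cons_val_fin_one, Matrix.head_fin_const, Matrix.cons_val_two,
    Matrix.tail_cons, Matrix.of_apply]
  linear_combination
    (4*b^2*c - a*c^2 + 4*a*b^2 - a^2*c + a^3 - 4*h*b^3 - 2*h*a*b*c - 3*h*a^2*b + 2*h^2*a*b^2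
      + h^2*a^2*c - 4*f*g*a*b^2 + f*g*a^2*c - f*g*a^3 + 3*f*g*h*a^2*b + f^2*g^2*a^3 - 4*e*b^3
      - 2*e*a*b*c - 3*e*a^2*b + 8*e*h*a*b^2 + e*h*a^2*c + e*h*a^3 - 3*e*h^2*a^2*b
      + 3*e*f*g*a^2*b - 2*e*f*g*h*a^3 + 2*e^2*a*b^2 + e^2*a^2*c - 3*e^2*h*a^2*b
      + e^2*h^2*a^3) * hdet
    + ((a - (e+h)*b + c)^2 + (a - (e+h)*b + c) * ((l:ℂ)+1) + ((l:ℂ)+1)^2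
        - ((e+h)^2 - 4) * (b^2 - a*c)) * h0
    - ((l:ℂ)+1) * hm
end

section
/- Let M ∈ ℂ with M ≠ 0 and y ∈ ℂ, and set P = [[M, 1], [0, M⁻¹]] and Q = [[M, 0], [2−y, M⁻¹]]. Then for every integer m, (QP⁻¹)^m (Q⁻¹P)^m = I − S_m(y)S_{m−1}(y)·[[y−2, M−M⁻¹], [(M−M⁻¹)(2−y), 2−y]] + S_{m−1}(y)²·[[(y−2)(y−M²), −(M⁻¹y − M − M⁻¹)], [(y−2)(M⁻¹y − M − M⁻¹), M⁻²(2−y)]]. -/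
open Polynomial

lemma chebS_zero' : chebS ℂ 0 = 1 := chebS.eq_1 ℂ

lemma chebS_one' : chebS ℂ 1 = X := chebS.eq_2 ℂ

lemma chebS_neg_one' : chebS ℂ (-1) = 0 := by
  rw [show (-1:ℤ) = Int.negSucc 0 from rfl, chebS.eq_4]
  norm_num [chebS_zero', chebS_one']

lemma chebS_rec' (n : ℤ) : chebS ℂ (n + 1) = X * chebS ℂ n - chebS ℂ (n - 1) := by
  rcases n with k | k
  · cases k with
    | zero => simp [chebS_zero', chebS_one', chebS_neg_one']
    | succ j =>
        rw [show (Int.ofNat (j+1) + 1) = Int.ofNat j.succ.succ from rfl, chebS.eq_3,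
            show (Int.ofNat (j+1) : ℤ) = (j:ℤ) + 1 by simp,
            show ((j:ℤ) + 1) - 1 = (j:ℤ) by ring]
  · rw [show (Int.negSucc k + 1) = -(k:ℤ) by rw [Int.negSucc_eq]; ring,
        show (Int.negSucc k - 1) = Int.negSucc (k+1) by
          rw [Int.negSucc_eq, Int.negSucc_eq]; push_cast; ring,
        chebS.eq_4, chebS.eq_4]
    push_cast
    rw [show (-((k:ℤ)+1) + 1 : ℤ) = -(k:ℤ) by ring,
        show (-((k:ℤ)+1) : ℤ) = Int.negSucc k by rw [Int.negSucc_eq], chebS.eq_4]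
    ring

lemma mul_lin_left {R : Type*} [CommRing R] (C : Matrix (Fin 2) (Fin 2) R) (y : R)
    (h : C * C = y • C - 1) (u v : R) :
    C * (u • C - v • 1) = (y*u - v) • C - u • 1 := by
  rw [mul_sub, mul_smul_comm, mul_smul_comm, h, mul_one, smul_sub, sub_smul, smul_smul]
  module

lemma mul_lin_right {R : Type*} [CommRing R] (C : Matrix (Fin 2) (Fin 2) R) (y : R)
    (h : C * C = y • C - 1) (u v : R) :
    (u • C - v • 1) * C = (y*u - v) • C - u • 1 := by
  rw [sub_mul, smul_mul_assoc, smul_mul_assoc, h, one_mul, smul_sub, sub_smul, smul_smul]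
  module

set_option maxHeartbeats 1000000 in
/-- For `P = [[M,1],[0,M⁻¹]]`, `Q = [[M,0],[2-y,M⁻¹]]` and every integer `m`, the matrix
`(QP⁻¹)^m (Q⁻¹P)^m` has the stated closed form in terms of `S_m(y)` and `S_{m-1}(y)`. -/
theorem even_word_formula (M y : ℂ) (hM : M ≠ 0) (m : ℤ) :
    (!![M, 0; 2 - y, M⁻¹] * (!![M, 1; 0, M⁻¹])⁻¹) ^ m
      * ((!![M, 0; 2 - y, M⁻¹])⁻¹ * !![M, 1; 0, M⁻¹]) ^ m
    = 1 - ((chebS ℂ m).eval y * (chebS ℂ (m - 1)).eval y) •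
            !![y - 2, M - M⁻¹; (M - M⁻¹) * (2 - y), 2 - y]
        + ((chebS ℂ (m - 1)).eval y) ^ 2 •
            !![(y - 2) * (y - M^2), -(M⁻¹ * y - M - M⁻¹);
               (y - 2) * (M⁻¹ * y - M - M⁻¹), M⁻¹^2 * (2 - y)] := by
  have hMN : M * M⁻¹ = 1 := mul_inv_cancel₀ hM
  have hNM : M⁻¹ * M = 1 := inv_mul_cancel₀ hM
  set A : Matrix (Fin 2) (Fin 2) ℂ := !![(1:ℂ), -M; (2-y)*M⁻¹, y-1] with hAdef
  set B : Matrix (Fin 2) (Fin 2) ℂ := !![(1:ℂ), M⁻¹; (y-2)*M, y-1] with hBdef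
  have hPinv : (!![M, 1; 0, M⁻¹])⁻¹ = !![M⁻¹, -1; 0, M] := by
    apply Matrix.inv_eq_right_inv
    ext i j
    fin_cases i <;> fin_cases j <;>
      simp [Matrix.mul_apply, Fin.sum_univ_two, Matrix.one_apply, hMN, hNM]
  have hQinv : (!![M, 0; 2 - y, M⁻¹])⁻¹ = !![M⁻¹, 0; -(2-y), M] := by
    apply Matrix.inv_eq_right_inv
    ext i j
    fin_cases i <;> fin_cases j <;>
      simp [Matrix.mul_apply, Fin.sum_univ_two, Matrix.one_apply, hMN, hNM]
    all_goals ring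
  have hA : !![M, 0; 2 - y, M⁻¹] * (!![M, 1; 0, M⁻¹])⁻¹ = A := by
    rw [hPinv, hAdef]
    ext i j
    fin_cases i <;> fin_cases j <;>
      simp [Matrix.mul_apply, Fin.sum_univ_two, hMN, hNM]
    all_goals ring
  have hB : (!![M, 0; 2 - y, M⁻¹])⁻¹ * !![M, 1; 0, M⁻¹] = B := by
    rw [hQinv, hBdef]
    ext i j
    fin_cases i <;> fin_cases j <;>
      simp [Matrix.mul_apply, Fin.sum_univ_two, hMN, hNM]
    all_goals ring
  have hdA : IsUnit A.det := by
    have : A.det = 1 := by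
      rw [hAdef, Matrix.det_fin_two_of]
      field_simp
      ring
    rw [this]; exact isUnit_one
  have hdB : IsUnit B.det := by
    have : B.det = 1 := by
      rw [hBdef, Matrix.det_fin_two_of]
      field_simp
      ring
    rw [this]; exact isUnit_one
  have hA2 : A * A = y • A - 1 := by
    rw [hAdef]
    ext i j
    fin_cases i <;> fin_cases j <;>
      simp [Matrix.mul_apply, Fin.sum_univ_two, Matrix.one_apply, Matrix.smul_apply,
        Matrix.sub_apply, smul_eq_mul]
    all_goals (try field_simp)
    all_goals ring
  have hB2 : B * B = y • B - 1 := by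
    rw [hBdef]
    ext i j
    fin_cases i <;> fin_cases j <;>
      simp [Matrix.mul_apply, Fin.sum_univ_two, Matrix.one_apply, Matrix.smul_apply,
        Matrix.sub_apply, smul_eq_mul]
    all_goals (try field_simp)
    all_goals ring
  set s : ℤ → ℂ := fun n => (chebS ℂ n).eval y with hsdef
  have hrec : ∀ n : ℤ, s (n + 1) = y * s n - s (n - 1) := by
    intro n
    have := congrArg (Polynomial.eval y) (chebS_rec' n)
    simpa [hsdef] using this
  have hs0 : s 0 = 1 := by simp [hsdef, chebS_zero']
  have hsm1 : s (-1) = 0 := by simp [hsdef, chebS_neg_one']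
  have hsm2 : s (-2) = -1 := by
    have := hrec (-1)
    rw [show (-1:ℤ) + 1 = 0 by ring, show (-1:ℤ) - 1 = -2 by ring, hs0, hsm1] at this
    linear_combination this
  have hPell : ∀ n : ℤ, s n ^ 2 - y * (s n * s (n-1)) + s (n-1) ^ 2 = 1 := by
    intro n
    induction n using Int.induction_on with
    | zero => rw [show (0:ℤ) - 1 = -1 by ring, hs0, hsm1]; ring
    | succ k ih =>
        rw [show ((k:ℤ)+1) - 1 = k by ring, hrec k]
        linear_combination ih
    | pred k ih =>
        have h2 : s (-(k:ℤ)) = y * s (-(k:ℤ)-1) - s (-(k:ℤ)-2) := by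
          have := hrec (-(k:ℤ)-1)
          rw [show (-(k:ℤ)-1) + 1 = -(k:ℤ) by ring, show (-(k:ℤ)-1) - 1 = -(k:ℤ)-2 by ring] at this
          exact this
        rw [show (-(k:ℤ)-1) - 1 = -(k:ℤ)-2 by ring]
        rw [show (-(k:ℤ)) - 1 = -(k:ℤ)-1 by ring] at ih
        linear_combination ih - (s (-(k:ℤ)) - s (-(k:ℤ)-2)) * h2
  -- factored form
  set F : ℤ → Matrix (Fin 2) (Fin 2) ℂ :=
    fun n => (s (n-1) • A - s (n-2) • 1) * (s (n-1) • B - s (n-2) • 1) with hFdef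
  have hmulA : ∀ u v : ℂ, A * (u • A - v • 1) = (y*u - v) • A - u • 1 :=
    mul_lin_left A y hA2
  have hmulB : ∀ u v : ℂ, (u • B - v • 1) * B = (y*u - v) • B - u • 1 :=
    mul_lin_right B y hB2
  have hstep : ∀ n : ℤ, A * F n * B = F (n+1) := by
    intro n
    have hsn : y * s (n-1) - s (n-2) = s n := by
      have := hrec (n-1)
      rw [show (n-1) + 1 = n by ring, show (n-1) - 1 = n-2 by ring] at this
      linear_combination -this
    rw [hFdef]
    simp only [show n+1-1 = n by ring, show n+1-2 = n-1 by ring]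
    calc A * ((s (n-1) • A - s (n-2) • 1) * (s (n-1) • B - s (n-2) • 1)) * B
        = (A * (s (n-1) • A - s (n-2) • 1)) * ((s (n-1) • B - s (n-2) • 1) * B) := by
          simp only [mul_assoc]
      _ = (s n • A - s (n-1) • 1) * (s n • B - s (n-1) • 1) := by
          rw [hmulA, hmulB, hsn]
  have hcancel : ∀ X : Matrix (Fin 2) (Fin 2) ℂ, A⁻¹ * (A * X * B) * B⁻¹ = X := by
    intro X
    rw [show A * X * B = A * (X * B) by rw [mul_assoc], ← mul_assoc A⁻¹,
        Matrix.nonsing_inv_mul A hdA, one_mul, mul_assoc, Matrix.mul_nonsing_inv B hdB, mul_one]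
  have main1 : ∀ n : ℤ, A ^ n * B ^ n = F n := by
    intro n
    induction n using Int.induction_on with
    | zero =>
        rw [zpow_zero, zpow_zero, one_mul, hFdef]
        simp only [show (0:ℤ)-1 = -1 by ring, show (0:ℤ)-2 = -2 by ring, hsm1, hsm2]
        simp
    | succ k ih =>
        have e1 : A ^ ((k:ℤ)+1) = A * A ^ (k:ℤ) := by
          rw [show (k:ℤ)+1 = 1+(k:ℤ) by ring, Matrix.zpow_add hdA, zpow_one]
        have e2 : B ^ ((k:ℤ)+1) = B ^ (k:ℤ) * B := Matrix.zpow_add_one hdB k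
        calc A ^ ((k:ℤ)+1) * B ^ ((k:ℤ)+1) = A * (A ^ (k:ℤ) * B ^ (k:ℤ)) * B := by
              rw [e1, e2]; simp only [mul_assoc]
          _ = A * F k * B := by rw [ih]
          _ = F ((k:ℤ)+1) := hstep k
    | pred k ih =>
        have e1 : A ^ (-(k:ℤ)) = A * A ^ (-(k:ℤ)-1) := by
          have h := Matrix.zpow_add hdA 1 (-(k:ℤ)-1)
          rw [zpow_one, show (1 + (-(k:ℤ)-1)) = -(k:ℤ) by ring] at h
          exact h
        have e2 : B ^ (-(k:ℤ)) = B ^ (-(k:ℤ)-1) * B := by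
          have h := Matrix.zpow_add_one hdB (-(k:ℤ)-1)
          rw [show (-(k:ℤ)-1)+1 = -(k:ℤ) by ring] at h
          exact h
        have e3 : A * F (-(k:ℤ)-1) * B = F (-(k:ℤ)) := by
          have := hstep (-(k:ℤ)-1)
          rw [show (-(k:ℤ)-1) + 1 = -(k:ℤ) by ring] at this
          exact this
        have e4 : A * (A ^ (-(k:ℤ)-1) * B ^ (-(k:ℤ)-1)) * B = A * F (-(k:ℤ)-1) * B := by
          rw [show A * (A ^ (-(k:ℤ)-1) * B ^ (-(k:ℤ)-1)) * B
                = A ^ (-(k:ℤ)) * B ^ (-(k:ℤ)) by rw [e1, e2]; simp only [mul_assoc], ih, ← e3]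
        have := congrArg (fun X => A⁻¹ * X * B⁻¹) e4
        simpa [hcancel] using this
  have main2 : ∀ n : ℤ, F n
      = 1 - (s n * s (n-1)) • !![y - 2, M - M⁻¹; (M - M⁻¹) * (2 - y), 2 - y]
        + (s (n-1)) ^ 2 • !![(y - 2) * (y - M^2), -(M⁻¹ * y - M - M⁻¹);
            (y - 2) * (M⁻¹ * y - M - M⁻¹), M⁻¹^2 * (2 - y)] := by
    intro n
    have hsn : s n = y * s (n-1) - s (n-2) := by
      have := hrec (n-1)
      rw [show (n-1) + 1 = n by ring, show (n-1) - 1 = n-2 by ring] at this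
      exact this
    have pell : s (n-1) ^ 2 - y * (s (n-1) * s (n-2)) + s (n-2) ^ 2 = 1 := by
      have := hPell (n-1)
      rw [show (n-1) - 1 = n-2 by ring] at this
      exact this
    have hG1 : ∀ u v : ℂ, u • A - v • (1 : Matrix (Fin 2) (Fin 2) ℂ)
        = !![u - v, -(u*M); u*(2-y)*M⁻¹, u*(y-1) - v] := by
      intro u v
      rw [hAdef]
      ext i j
      fin_cases i <;> fin_cases j <;>
        simp [Matrix.one_apply, Matrix.smul_apply, Matrix.sub_apply, smul_eq_mul]
      all_goals ring
    have hG2 : ∀ u v : ℂ, u • B - v • (1 : Matrix (Fin 2) (Fin 2) ℂ)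
        = !![u - v, u*M⁻¹; u*(y-2)*M, u*(y-1) - v] := by
      intro u v
      rw [hBdef]
      ext i j
      fin_cases i <;> fin_cases j <;>
        simp [Matrix.one_apply, Matrix.smul_apply, Matrix.sub_apply, smul_eq_mul]
      all_goals ring
    simp only [hFdef]
    rw [hsn]
    set u : ℂ := s (n-1) with hu
    set v : ℂ := s (n-2) with hv
    clear_value u v
    have pell' : u ^ 2 - y * (u * v) + v ^ 2 = 1 := pell
    have hv2 : v ^ 2 = 1 - u ^ 2 + y * (u * v) := by rw [← pell']; ring
    rw [hG1, hG2, Matrix.mul_fin_two]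
    ext i j
    fin_cases i <;> fin_cases j <;>
      simp [Matrix.one_apply, Matrix.smul_apply, Matrix.sub_apply, Matrix.add_apply, smul_eq_mul]
    all_goals (try field_simp)
    all_goals (try ring)
    all_goals try rw [hv2]
    all_goals ring
  rw [hA, hB]
  have := (main1 m).trans (main2 m)
  exact this
end

section
/- Let m ≥ 1 and n ≥ 1 be integers with m·n ≥ 2, and let y ∈ ℂ be an algebraic integer. Set z = 2 + (y−2)²·S_{m−1}(y)². Then m·n·S_{m−1}(y)²·S_{n−1}(z)² is neither 1 nor −1. -/
open Polynomial

/-- Evaluating `chebS` at an algebraic integer gives an algebraic integer. -/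
theorem chebS_integral (x : ℂ) (hx : IsIntegral ℤ x) (l : ℤ) :
    IsIntegral ℤ ((chebS ℂ l).eval x) := by
  induction l using chebS.induct with
  | case1 => simpa [chebS] using isIntegral_one
  | case2 => simpa [chebS] using hx
  | case3 n ih1 ih2 => rw [chebS.eq_3]; simpa using (hx.mul ih1).sub ih2
  | case4 n ih1 ih2 => rw [chebS.eq_4]; simpa using (hx.mul ih1).sub ih2

/-- If `N ≥ 2` and `c` is an algebraic integer with `N·c = ±1`, contradiction. -/
theorem key_aux (N : ℤ) (hN : 2 ≤ N) (c : ℂ) (hc : IsIntegral ℤ c) (ε : ℤ)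
    (hε : ε = 1 ∨ ε = -1) (h : (N : ℂ) * c = ε) : False := by
  have hN0 : (N : ℚ) ≠ 0 := Int.cast_ne_zero.mpr (by omega)
  set q : ℚ := ε / N with hq
  have hcq : c = (q : ℂ) := by
    have : (N : ℂ) ≠ 0 := Int.cast_ne_zero.mpr (by omega)
    rw [hq]
    push_cast
    rw [eq_div_iff this]
    linear_combination h
  have hiq : IsIntegral ℤ (algebraMap ℚ ℂ q) := by
    rw [eq_ratCast (algebraMap ℚ ℂ) q, ← hcq]; exact hc
  have hiq2 : IsIntegral ℤ q :=
    (isIntegral_algebraMap_iff (algebraMap ℚ ℂ).injective).mp hiq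
  obtain ⟨k, hk⟩ := IsIntegrallyClosed.isIntegral_iff.mp hiq2
  have hk' : (k : ℚ) = q := by exact_mod_cast hk
  have : ((k * N : ℤ) : ℚ) = ((ε : ℤ) : ℚ) := by
    push_cast
    rw [hk', hq]; field_simp
  have hkN : k * N = ε := by exact_mod_cast this
  have hdvd : N ∣ 1 := by
    rcases hε with h1 | h1 <;> simp [h1] at hkN
    · exact ⟨k, by linarith⟩
    · exact ⟨-k, by linarith⟩
  have := Int.le_of_dvd one_pos hdvd
  omega

/-- For integers `m, n ≥ 1` with `mn ≥ 2` and an algebraic integer `y ∈ ℂ`, with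
`z = 2 + (y-2)²·S_{m-1}(y)²`, the quantity `m·n·S_{m-1}(y)²·S_{n-1}(z)²` is neither `1`
nor `-1`. -/
theorem leading_coeff_not_monic (m n : ℤ) (hm : 1 ≤ m) (hn : 1 ≤ n) (hmn : 2 ≤ m * n)
    (y : ℂ) (hy : IsIntegral ℤ y) (z : ℂ)
    (hz : z = 2 + (y - 2)^2 * ((chebS ℂ (m - 1)).eval y) ^ 2) :
    (m : ℂ) * n * ((chebS ℂ (m - 1)).eval y) ^ 2 * ((chebS ℂ (n - 1)).eval z) ^ 2 ≠ 1 ∧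
    (m : ℂ) * n * ((chebS ℂ (m - 1)).eval y) ^ 2 * ((chebS ℂ (n - 1)).eval z) ^ 2 ≠ -1 := by
  have h2 : IsIntegral ℤ (2 : ℂ) := by
    simpa using isIntegral_algebraMap (R := ℤ) (A := ℂ) (x := 2)
  have ha : IsIntegral ℤ ((chebS ℂ (m - 1)).eval y) := chebS_integral y hy _
  have hzint : IsIntegral ℤ z := by
    rw [hz]; exact h2.add (((hy.sub h2).pow 2).mul (ha.pow 2))
  have hb : IsIntegral ℤ ((chebS ℂ (n - 1)).eval z) := chebS_integral z hzint _
  have hc : IsIntegral ℤ (((chebS ℂ (m - 1)).eval y) ^ 2 * ((chebS ℂ (n - 1)).eval z) ^ 2) :=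
    (ha.pow 2).mul (hb.pow 2)
  constructor
  · intro h
    refine key_aux (m * n) hmn _ hc 1 (Or.inl rfl) ?_
    push_cast
    linear_combination h
  · intro h
    refine key_aux (m * n) hmn _ hc (-1) (Or.inr rfl) ?_
    push_cast
    linear_combination h
end
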